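/- If the bipartite graph H_0 = (L_0, R_0, E_0) has a perfect matching, then the Ollivier–Ricci curvature of the edge {u,v} in the gadget graph G equals Ric_G({u,v}) = 1/(n+3); equivalently, EMD_G(u,v) = (n+2)/(n+3). -/

import Mathlib

open Finset
open scoped Classical

variable {V : Type*}

/-- The open neighborhood of `u` in `G`, as a finset. -/
noncomputable def nbrF [Fintype V] (G : SimpleGraph V) (u : V) : Finset V :=
  Finset.univ.filter fun x => G.Adj u x

/-- The degree of `u` in `G`. -/
noncomputable def degG [Fintype V] (G : SimpleGraph V) (u : V) : ℕ := (nbrF G u).card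

/-- The closed neighborhood `N[u]` of `u` in `G`. -/
noncomputable def cnbr [Fintype V] (G : SimpleGraph V) (u : V) : Finset V :=
  insert u (nbrF G u)

/-- A transport plan for `(G,u,v)`: nonnegative, with row sums `1/(deg u + 1)` over
`N[u]` and column sums `1/(deg v + 1)` over `N[v]`. -/
def IsPlanG [Fintype V] (G : SimpleGraph V) (u v : V) (z : V → V → ℝ) : Prop :=
  (∀ x y, 0 ≤ z x y) ∧
  (∀ x ∈ cnbr G u, ∑ y ∈ cnbr G v, z x y = 1 / ((degG G u : ℝ) + 1)) ∧
  (∀ y ∈ cnbr G v, ∑ x ∈ cnbr G u, z x y = 1 / ((degG G v : ℝ) + 1))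

/-- The cost of a transport plan, with respect to shortest-path distance in `G`. -/
noncomputable def planCostG [Fintype V] (G : SimpleGraph V) (u v : V) (z : V → V → ℝ) : ℝ :=
  ∑ x ∈ cnbr G u, ∑ y ∈ cnbr G v, (G.dist x y : ℝ) * z x y

/-- The earth mover's distance `EMD_G(u,v)`: the minimum cost of a transport plan. -/
noncomputable def EMDG [Fintype V] (G : SimpleGraph V) (u v : V) : ℝ :=
  sInf {t | ∃ z, IsPlanG G u v z ∧ planCostG G u v z = t}

/-- The Ollivier–Ricci curvature of the edge `{u,v}`. -/
noncomputable def RicG [Fintype V] (G : SimpleGraph V) (u v : V) : ℝ :=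
  1 - EMDG G u v

/-- The five extra vertices `u, v, p, p', x` of the gadget graph. -/
inductive Extra where
  | u | v | p | p' | x
deriving DecidableEq

instance : Fintype Extra where
  elems := {Extra.u, Extra.v, Extra.p, Extra.p', Extra.x}
  complete := by intro x; cases x <;> simp

/-- The vertex set of the gadget graph: `L ⊔ R ⊔ {u,v,p,p',x}`. -/
abbrev GV (L R : Type*) := (L ⊕ R) ⊕ Extra

/-- The base edge relation of the gadget graph built from the bipartite graph
`H₀ = (L, R, E₀)`: the edge `{u,v}`; `{u,a}` for `a ∈ L`; `{v,b}` for `b ∈ R`;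
`{u,p}`; `{v,p'}`; `{p,x}`; `{p',x}`; and `{a,b}` whenever `E₀ a b`. -/
def gadgetRel {L R : Type*} (E0 : L → R → Prop) : GV L R → GV L R → Prop
  | Sum.inr .u, Sum.inr .v => True
  | Sum.inr .u, Sum.inl (Sum.inl _) => True
  | Sum.inr .v, Sum.inl (Sum.inr _) => True
  | Sum.inr .u, Sum.inr .p => True
  | Sum.inr .v, Sum.inr .p' => True
  | Sum.inr .p, Sum.inr .x => True
  | Sum.inr .p', Sum.inr .x => True
  | Sum.inl (Sum.inl a), Sum.inl (Sum.inr b) => E0 a b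
  | _, _ => False

/-- The gadget graph. -/
def gadget {L R : Type*} (E0 : L → R → Prop) : SimpleGraph (GV L R) :=
  SimpleGraph.fromRel (gadgetRel E0)


set_option linter.unusedSectionVars false

section Aux

variable {L R : Type*} [Fintype L] [Fintype R] {E0 : L → R → Prop}

/-- embedding of `L` into the gadget's vertices -/
def embL (L R : Type*) : L ↪ GV L R :=
  ⟨fun a => Sum.inl (Sum.inl a), fun a b h => by simpa using h⟩

/-- embedding of `R` into the gadget's vertices -/
def embR (L R : Type*) : R ↪ GV L R :=
  ⟨fun b => Sum.inl (Sum.inr b), fun a b h => by simpa using h⟩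

/-- the open neighborhood of `u` as an instance-free finset -/
noncomputable def nbrUF (L R : Type*) [Fintype L] [Fintype R] : Finset (GV L R) :=
  Finset.cons (Sum.inr Extra.v)
    (Finset.cons (Sum.inr Extra.p) (Finset.univ.map (embL L R)) (by simp [embL]))
    (by simp [embL])

/-- the open neighborhood of `v` as an instance-free finset -/
noncomputable def nbrVF (L R : Type*) [Fintype L] [Fintype R] : Finset (GV L R) :=
  Finset.cons (Sum.inr Extra.u)
    (Finset.cons (Sum.inr Extra.p') (Finset.univ.map (embR L R)) (by simp [embR]))
    (by simp [embR])

lemma nbrFU_eq : nbrF (gadget E0) (Sum.inr Extra.u) = nbrUF L R := by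
  ext w
  simp only [nbrF, Finset.mem_filter, Finset.mem_univ, true_and,
    nbrUF, Finset.mem_cons, Finset.mem_map, embL, Function.Embedding.coeFn_mk]
  rcases w with (a | b) | e
  · simp [gadget, SimpleGraph.fromRel_adj, gadgetRel]; exact ⟨_, rfl⟩
  · simp [gadget, SimpleGraph.fromRel_adj, gadgetRel]; intro x h; cases h
  · cases e <;> simp [gadget, SimpleGraph.fromRel_adj, gadgetRel]

lemma nbrFV_eq : nbrF (gadget E0) (Sum.inr Extra.v) = nbrVF L R := by
  ext w
  simp only [nbrF, Finset.mem_filter, Finset.mem_univ, true_and,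
    nbrVF, Finset.mem_cons, Finset.mem_map, embR, Function.Embedding.coeFn_mk]
  rcases w with (a | b) | e
  · simp [gadget, SimpleGraph.fromRel_adj, gadgetRel]; intro x h; cases h
  · simp [gadget, SimpleGraph.fromRel_adj, gadgetRel]; exact ⟨_, rfl⟩
  · cases e <;> simp [gadget, SimpleGraph.fromRel_adj, gadgetRel]

/-- `N[u]` as an instance-free finset -/
noncomputable def cnbrUF (L R : Type*) [Fintype L] [Fintype R] : Finset (GV L R) :=
  Finset.cons (Sum.inr Extra.u)
    (Finset.cons (Sum.inr Extra.v)
      (Finset.cons (Sum.inr Extra.p) (Finset.univ.map (embL L R)) (by simp [embL]))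
      (by simp [embL])) (by simp [embL])

/-- `N[v]` as an instance-free finset -/
noncomputable def cnbrVF (L R : Type*) [Fintype L] [Fintype R] : Finset (GV L R) :=
  Finset.cons (Sum.inr Extra.u)
    (Finset.cons (Sum.inr Extra.v)
      (Finset.cons (Sum.inr Extra.p') (Finset.univ.map (embR L R)) (by simp [embR]))
      (by simp [embR])) (by simp [embR])

lemma cnbrU_eq : cnbr (gadget E0) (Sum.inr Extra.u) = cnbrUF L R := by
  ext w
  simp only [cnbr, nbrF, Finset.mem_insert, Finset.mem_filter, Finset.mem_univ, true_and,
    cnbrUF, Finset.mem_cons, Finset.mem_map, embL, Function.Embedding.coeFn_mk]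
  rcases w with (a | b) | e
  · simp [gadget, SimpleGraph.fromRel_adj, gadgetRel]; exact ⟨_, rfl⟩
  · simp [gadget, SimpleGraph.fromRel_adj, gadgetRel]; intro x h; cases h
  · cases e <;> simp [gadget, SimpleGraph.fromRel_adj, gadgetRel]

lemma cnbrV_eq : cnbr (gadget E0) (Sum.inr Extra.v) = cnbrVF L R := by
  ext w
  simp only [cnbr, nbrF, Finset.mem_insert, Finset.mem_filter, Finset.mem_univ, true_and,
    cnbrVF, Finset.mem_cons, Finset.mem_map, embR, Function.Embedding.coeFn_mk]
  rcases w with (a | b) | e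
  · simp [gadget, SimpleGraph.fromRel_adj, gadgetRel]; intro x h; cases h
  · simp [gadget, SimpleGraph.fromRel_adj, gadgetRel]; exact ⟨_, rfl⟩
  · cases e <;> simp [gadget, SimpleGraph.fromRel_adj, gadgetRel]

lemma degU : degG (gadget E0) (Sum.inr Extra.u) = Fintype.card L + 2 := by
  rw [degG, nbrFU_eq]
  simp only [nbrUF, Finset.card_cons, Finset.card_map, Finset.card_univ]

lemma degV : degG (gadget E0) (Sum.inr Extra.v) = Fintype.card R + 2 := by
  rw [degG, nbrFV_eq]
  simp only [nbrVF, Finset.card_cons, Finset.card_map, Finset.card_univ]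

lemma sum_cnbrU (F : GV L R → ℝ) :
    ∑ x ∈ cnbr (gadget E0) (Sum.inr Extra.u), F x =
      F (Sum.inr Extra.u) + F (Sum.inr Extra.v) + F (Sum.inr Extra.p) +
        ∑ a : L, F (Sum.inl (Sum.inl a)) := by
  rw [cnbrU_eq]
  simp only [cnbrUF, Finset.sum_cons, Finset.sum_map, embL, Function.Embedding.coeFn_mk]
  ring_nf
  rfl

lemma sum_cnbrV (F : GV L R → ℝ) :
    ∑ y ∈ cnbr (gadget E0) (Sum.inr Extra.v), F y =
      F (Sum.inr Extra.u) + F (Sum.inr Extra.v) + F (Sum.inr Extra.p') +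
        ∑ b : R, F (Sum.inl (Sum.inr b)) := by
  rw [cnbrV_eq]
  simp only [cnbrVF, Finset.sum_cons, Finset.sum_map, embR, Function.Embedding.coeFn_mk]
  ring_nf
  rfl

lemma memU {x : GV L R} (hx : x ∈ cnbr (gadget E0) (Sum.inr Extra.u)) :
    x = Sum.inr Extra.u ∨ x = Sum.inr Extra.v ∨ x = Sum.inr Extra.p ∨
      ∃ a : L, x = Sum.inl (Sum.inl a) := by
  rw [cnbrU_eq] at hx
  simp only [cnbrUF, Finset.mem_cons, Finset.mem_map, Finset.mem_univ, true_and, embL,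
    Function.Embedding.coeFn_mk] at hx
  rcases hx with h | h | h | ⟨a, ha⟩
  · exact Or.inl h
  · exact Or.inr (Or.inl h)
  · exact Or.inr (Or.inr (Or.inl h))
  · exact Or.inr (Or.inr (Or.inr ⟨a, ha.symm⟩))

lemma memV {y : GV L R} (hy : y ∈ cnbr (gadget E0) (Sum.inr Extra.v)) :
    y = Sum.inr Extra.u ∨ y = Sum.inr Extra.v ∨ y = Sum.inr Extra.p' ∨
      ∃ b : R, y = Sum.inl (Sum.inr b) := by
  rw [cnbrV_eq] at hy
  simp only [cnbrVF, Finset.mem_cons, Finset.mem_map, Finset.mem_univ, true_and, embR,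
    Function.Embedding.coeFn_mk] at hy
  rcases hy with h | h | h | ⟨b, hb⟩
  · exact Or.inl h
  · exact Or.inr (Or.inl h)
  · exact Or.inr (Or.inr (Or.inl h))
  · exact Or.inr (Or.inr (Or.inr ⟨b, hb.symm⟩))

lemma reachU (w : GV L R) : (gadget E0).Reachable (Sum.inr Extra.u) w := by
  have hv : (gadget E0).Adj (Sum.inr Extra.u) (Sum.inr Extra.v) := by
    simp [gadget, SimpleGraph.fromRel_adj, gadgetRel]
  have hp : (gadget E0).Adj (Sum.inr Extra.u) (Sum.inr Extra.p) := by
    simp [gadget, SimpleGraph.fromRel_adj, gadgetRel]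
  rcases w with (a | b) | e
  · exact SimpleGraph.Adj.reachable (by simp [gadget, SimpleGraph.fromRel_adj, gadgetRel])
  · exact hv.reachable.trans (SimpleGraph.Adj.reachable
      (by simp [gadget, SimpleGraph.fromRel_adj, gadgetRel] :
        (gadget E0).Adj (Sum.inr Extra.v) (Sum.inl (Sum.inr b))))
  · cases e with
    | u => exact SimpleGraph.Reachable.refl _
    | v => exact hv.reachable
    | p => exact hp.reachable
    | p' => exact hv.reachable.trans (SimpleGraph.Adj.reachable
        (by simp [gadget, SimpleGraph.fromRel_adj, gadgetRel] :
          (gadget E0).Adj (Sum.inr Extra.v) (Sum.inr Extra.p')))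
    | x => exact hp.reachable.trans (SimpleGraph.Adj.reachable
        (by simp [gadget, SimpleGraph.fromRel_adj, gadgetRel] :
          (gadget E0).Adj (Sum.inr Extra.p) (Sum.inr Extra.x)))

lemma reachAll (x y : GV L R) : (gadget E0).Reachable x y :=
  (reachU x).symm.trans (reachU y)

lemma one_le_dist {x y : GV L R} (h : x ≠ y) : (1 : ℝ) ≤ ((gadget E0).dist x y : ℝ) := by
  have := (reachAll (E0 := E0) x y).pos_dist_of_ne h
  exact_mod_cast this

lemma two_le_dist {x y : GV L R} (h : x ≠ y) (hna : ¬ (gadget E0).Adj x y) :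
    (2 : ℝ) ≤ ((gadget E0).dist x y : ℝ) := by
  have h0 := (reachAll (E0 := E0) x y).pos_dist_of_ne h
  have h1 : (gadget E0).dist x y ≠ 1 := fun hc => hna (SimpleGraph.dist_eq_one_iff_adj.mp hc)
  have : 2 ≤ (gadget E0).dist x y := by omega
  exact_mod_cast this

lemma distPP' : (gadget E0).dist (Sum.inr Extra.p) (Sum.inr Extra.p') = 2 := by
  have hpx : (gadget E0).Adj (Sum.inr Extra.p) (Sum.inr Extra.x) := by
    simp [gadget, SimpleGraph.fromRel_adj, gadgetRel]
  have hxp' : (gadget E0).Adj (Sum.inr Extra.x) (Sum.inr Extra.p') := by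
    simp [gadget, SimpleGraph.fromRel_adj, gadgetRel]
  have hub := SimpleGraph.dist_le
    (SimpleGraph.Walk.cons hpx (SimpleGraph.Walk.cons hxp' SimpleGraph.Walk.nil))
  simp only [SimpleGraph.Walk.length_cons, SimpleGraph.Walk.length_nil] at hub
  have h0 := (reachAll (E0 := E0) (Sum.inr Extra.p) (Sum.inr Extra.p')).pos_dist_of_ne (by simp)
  have h1 : (gadget E0).dist (Sum.inr Extra.p) (Sum.inr Extra.p') ≠ 1 := fun hc => by
    have := SimpleGraph.dist_eq_one_iff_adj.mp hc
    simp [gadget, SimpleGraph.fromRel_adj, gadgetRel] at this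
  omega

lemma distAB {a : L} {b : R} (h : E0 a b) :
    (gadget E0).dist (Sum.inl (Sum.inl a)) (Sum.inl (Sum.inr b)) = 1 :=
  SimpleGraph.dist_eq_one_iff_adj.mpr (by simp [gadget, SimpleGraph.fromRel_adj, gadgetRel, h])

/-- the transport plan induced by a perfect matching -/
noncomputable def zplan (f : L ≃ R) (c : ℝ) : GV L R → GV L R → ℝ
  | Sum.inr .u, Sum.inr .u => c
  | Sum.inr .v, Sum.inr .v => c
  | Sum.inr .p, Sum.inr .p' => c
  | Sum.inl (Sum.inl a), Sum.inl (Sum.inr b) => if f a = b then c else 0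
  | _, _ => 0

section ZplanLemmas
variable (f : L ≃ R) (c : ℝ)

@[simp] lemma zp_uu : zplan f c (Sum.inr Extra.u) (Sum.inr Extra.u) = c := rfl
@[simp] lemma zp_uv : zplan f c (Sum.inr Extra.u) (Sum.inr Extra.v) = 0 := rfl
@[simp] lemma zp_up' : zplan f c (Sum.inr Extra.u) (Sum.inr Extra.p') = 0 := rfl
@[simp] lemma zp_ub (b : R) : zplan f c (Sum.inr Extra.u) (Sum.inl (Sum.inr b)) = 0 := rfl
@[simp] lemma zp_vu : zplan f c (Sum.inr Extra.v) (Sum.inr Extra.u) = 0 := rfl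
@[simp] lemma zp_vv : zplan f c (Sum.inr Extra.v) (Sum.inr Extra.v) = c := rfl
@[simp] lemma zp_vp' : zplan f c (Sum.inr Extra.v) (Sum.inr Extra.p') = 0 := rfl
@[simp] lemma zp_vb (b : R) : zplan f c (Sum.inr Extra.v) (Sum.inl (Sum.inr b)) = 0 := rfl
@[simp] lemma zp_pu : zplan f c (Sum.inr Extra.p) (Sum.inr Extra.u) = 0 := rfl
@[simp] lemma zp_pv : zplan f c (Sum.inr Extra.p) (Sum.inr Extra.v) = 0 := rfl
@[simp] lemma zp_pp' : zplan f c (Sum.inr Extra.p) (Sum.inr Extra.p') = c := rfl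
@[simp] lemma zp_pb (b : R) : zplan f c (Sum.inr Extra.p) (Sum.inl (Sum.inr b)) = 0 := rfl
@[simp] lemma zp_au (a : L) : zplan f c (Sum.inl (Sum.inl a)) (Sum.inr Extra.u) = 0 := rfl
@[simp] lemma zp_av (a : L) : zplan f c (Sum.inl (Sum.inl a)) (Sum.inr Extra.v) = 0 := rfl
@[simp] lemma zp_ap' (a : L) : zplan f c (Sum.inl (Sum.inl a)) (Sum.inr Extra.p') = 0 := rfl
@[simp] lemma zp_ab (a : L) (b : R) :
    zplan f c (Sum.inl (Sum.inl a)) (Sum.inl (Sum.inr b)) = if f a = b then c else 0 := rfl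

end ZplanLemmas

lemma zplan_nonneg (f : L ≃ R) {c : ℝ} (hc : 0 ≤ c) (x y : GV L R) : 0 ≤ zplan f c x y := by
  rcases x with (a | b) | e <;> rcases y with (a' | b') | e'
  all_goals first
    | exact le_refl 0
    | exact hc
    | (simp only [zplan]; positivity)
    | (cases e <;> cases e' <;> first | exact le_refl 0 | exact hc | (simp only [zplan]))
    | (cases e <;> first | exact le_refl 0 | exact hc)
    | (cases e' <;> first | exact le_refl 0 | exact hc)

/-- the Kantorovich potential -/
noncomputable def phi : GV L R → ℝ
  | Sum.inr .p => 2
  | Sum.inr .u => 1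
  | Sum.inl (Sum.inl _) => 1
  | _ => 0

@[simp] lemma phi_u : phi (Sum.inr Extra.u : GV L R) = 1 := rfl
@[simp] lemma phi_v : phi (Sum.inr Extra.v : GV L R) = 0 := rfl
@[simp] lemma phi_p : phi (Sum.inr Extra.p : GV L R) = 2 := rfl
@[simp] lemma phi_p' : phi (Sum.inr Extra.p' : GV L R) = 0 := rfl
@[simp] lemma phi_a (a : L) : phi (Sum.inl (Sum.inl a) : GV L R) = 1 := rfl
@[simp] lemma phi_b (b : R) : phi (Sum.inl (Sum.inr b) : GV L R) = 0 := rfl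

lemma phi_bound {x y : GV L R} (hx : x ∈ cnbr (gadget E0) (Sum.inr Extra.u))
    (hy : y ∈ cnbr (gadget E0) (Sum.inr Extra.v)) :
    phi x - phi y ≤ ((gadget E0).dist x y : ℝ) := by
  have hd0 : ∀ x y : GV L R, (0 : ℝ) ≤ ((gadget E0).dist x y : ℝ) := fun x y => by positivity
  rcases memU hx with rfl | rfl | rfl | ⟨a, rfl⟩ <;>
    rcases memV hy with rfl | rfl | rfl | ⟨b, rfl⟩
  · simp
  · have := one_le_dist (E0 := E0)
      (show (Sum.inr Extra.u : GV L R) ≠ Sum.inr Extra.v by simp)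
    simp only [phi_u, phi_v]; linarith
  · have := one_le_dist (E0 := E0)
      (show (Sum.inr Extra.u : GV L R) ≠ Sum.inr Extra.p' by simp)
    simp only [phi_u, phi_p']; linarith
  · have := one_le_dist (E0 := E0)
      (show (Sum.inr Extra.u : GV L R) ≠ Sum.inl (Sum.inr b) by simp)
    simp only [phi_u, phi_b]; linarith
  · have := hd0 (Sum.inr Extra.v) (Sum.inr Extra.u); simp only [phi_v, phi_u]; linarith
  · simp
  · have := hd0 (Sum.inr Extra.v) (Sum.inr Extra.p'); simp only [phi_v, phi_p']; linarith
  · have := hd0 (Sum.inr Extra.v) (Sum.inl (Sum.inr b)); simp only [phi_v, phi_b]; linarith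
  · have := one_le_dist (E0 := E0)
      (show (Sum.inr Extra.p : GV L R) ≠ Sum.inr Extra.u by simp)
    simp only [phi_p, phi_u]; linarith
  · have := two_le_dist (E0 := E0)
      (show (Sum.inr Extra.p : GV L R) ≠ Sum.inr Extra.v by simp)
      (by simp [gadget, SimpleGraph.fromRel_adj, gadgetRel])
    simp only [phi_p, phi_v]; linarith
  · have := two_le_dist (E0 := E0)
      (show (Sum.inr Extra.p : GV L R) ≠ Sum.inr Extra.p' by simp)
      (by simp [gadget, SimpleGraph.fromRel_adj, gadgetRel])
    simp only [phi_p, phi_p']; linarith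
  · have := two_le_dist (E0 := E0)
      (show (Sum.inr Extra.p : GV L R) ≠ Sum.inl (Sum.inr b) by simp)
      (by simp [gadget, SimpleGraph.fromRel_adj, gadgetRel])
    simp only [phi_p, phi_b]; linarith
  · have := hd0 (Sum.inl (Sum.inl a)) (Sum.inr Extra.u); simp only [phi_a, phi_u]; linarith
  · have := one_le_dist (E0 := E0)
      (show (Sum.inl (Sum.inl a) : GV L R) ≠ Sum.inr Extra.v by simp)
    simp only [phi_a, phi_v]; linarith
  · have := one_le_dist (E0 := E0)
      (show (Sum.inl (Sum.inl a) : GV L R) ≠ Sum.inr Extra.p' by simp)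
    simp only [phi_a, phi_p']; linarith
  · have := one_le_dist (E0 := E0)
      (show (Sum.inl (Sum.inl a) : GV L R) ≠ Sum.inl (Sum.inr b) by simp)
    simp only [phi_a, phi_b]; linarith

end Aux

/-- if the bipartite graph `H₀ = (L,R,E₀)` (with `|L| = |R| = n ≥ 1`) has
a perfect matching, then in the gadget graph `Ric({u,v}) = 1/(n+3)`, equivalently
`EMD(u,v) = (n+2)/(n+3)`. -/
theorem stmt14 {L R : Type*} [Fintype L] [Fintype R] (n : ℕ) (hn : 1 ≤ n)
    (hL : Fintype.card L = n) (hR : Fintype.card R = n)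
    (E0 : L → R → Prop) (hpm : ∃ f : L ≃ R, ∀ a : L, E0 a (f a)) :
    RicG (gadget E0) (Sum.inr Extra.u) (Sum.inr Extra.v) = 1 / ((n : ℝ) + 3) ∧
    EMDG (gadget E0) (Sum.inr Extra.u) (Sum.inr Extra.v) = ((n : ℝ) + 2) / ((n : ℝ) + 3) := by
  obtain ⟨f, hf⟩ := hpm
  have hn3 : (0 : ℝ) < (n : ℝ) + 3 := by positivity
  set c : ℝ := 1 / ((n : ℝ) + 3) with hc
  have hc0 : 0 ≤ c := by positivity
  have hdegu : ((degG (gadget E0) (Sum.inr Extra.u) : ℝ) + 1) = (n : ℝ) + 3 := by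
    rw [degU, hL]; push_cast; ring
  have hdegv : ((degG (gadget E0) (Sum.inr Extra.v) : ℝ) + 1) = (n : ℝ) + 3 := by
    rw [degV, hR]; push_cast; ring
  -- the matching plan
  have hrow : ∀ x ∈ cnbr (gadget E0) (Sum.inr Extra.u),
      ∑ y ∈ cnbr (gadget E0) (Sum.inr Extra.v), zplan f c x y = c := by
    intro x hx
    rcases memU hx with rfl | rfl | rfl | ⟨a, rfl⟩
    · rw [sum_cnbrV]; simp
    · rw [sum_cnbrV]; simp
    · rw [sum_cnbrV]; simp
    · rw [sum_cnbrV]; simp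
  have hcol : ∀ y ∈ cnbr (gadget E0) (Sum.inr Extra.v),
      ∑ x ∈ cnbr (gadget E0) (Sum.inr Extra.u), zplan f c x y = c := by
    intro y hy
    rcases memV hy with rfl | rfl | rfl | ⟨b, rfl⟩
    · rw [sum_cnbrU]; simp
    · rw [sum_cnbrU]; simp
    · rw [sum_cnbrU]; simp
    · rw [sum_cnbrU]; simp [← Equiv.eq_symm_apply]
  have hplan : IsPlanG (gadget E0) (Sum.inr Extra.u) (Sum.inr Extra.v) (zplan f c) := by
    refine ⟨zplan_nonneg f hc0, ?_, ?_⟩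
    · intro x hx; rw [hrow x hx, hdegu]
    · intro y hy; rw [hcol y hy, hdegv]
  -- cost of the matching plan
  have hinner : ∀ a : L, ∑ y ∈ cnbr (gadget E0) (Sum.inr Extra.v),
      ((gadget E0).dist (Sum.inl (Sum.inl a)) y : ℝ) * zplan f c (Sum.inl (Sum.inl a)) y = c := by
    intro a
    rw [sum_cnbrV]
    simp only [zp_au, zp_av, zp_ap', zp_ab, mul_zero, zero_add, add_zero, mul_ite,
      Finset.sum_ite_eq, Finset.mem_univ, if_true]
    rw [distAB (hf a)]
    norm_num
  have hcost : planCostG (gadget E0) (Sum.inr Extra.u) (Sum.inr Extra.v) (zplan f c)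
      = ((n : ℝ) + 2) * c := by
    rw [planCostG, sum_cnbrU]
    rw [sum_cnbrV, sum_cnbrV, sum_cnbrV]
    simp only [hinner, zp_uu, zp_uv, zp_up', zp_ub, zp_vu, zp_vv, zp_vp', zp_vb,
      zp_pu, zp_pv, zp_pp', zp_pb, mul_zero, add_zero, zero_add,
      SimpleGraph.dist_self, Nat.cast_zero, zero_mul, distPP',
      Finset.sum_const, Finset.card_univ, hL, nsmul_eq_mul]
    push_cast
    ring
  -- lower bound for any plan
  have hlb : ∀ zf, IsPlanG (gadget E0) (Sum.inr Extra.u) (Sum.inr Extra.v) zf →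
      ((n : ℝ) + 2) * c ≤ planCostG (gadget E0) (Sum.inr Extra.u) (Sum.inr Extra.v) zf := by
    intro zf hz
    obtain ⟨hz0, hzr, hzc⟩ := hz
    have hrow' : ∀ x ∈ cnbr (gadget E0) (Sum.inr Extra.u),
        ∑ y ∈ cnbr (gadget E0) (Sum.inr Extra.v), zf x y = c := by
      intro x hx; rw [hzr x hx, hdegu]
    have hcol' : ∀ y ∈ cnbr (gadget E0) (Sum.inr Extra.v),
        ∑ x ∈ cnbr (gadget E0) (Sum.inr Extra.u), zf x y = c := by
      intro y hy; rw [hzc y hy, hdegv]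
    have e1 : ∀ x ∈ cnbr (gadget E0) (Sum.inr Extra.u),
        ∑ y ∈ cnbr (gadget E0) (Sum.inr Extra.v), (phi x - phi y) * zf x y
          = phi x * c - ∑ y ∈ cnbr (gadget E0) (Sum.inr Extra.v), phi y * zf x y := by
      intro x hx
      have : ∀ y ∈ cnbr (gadget E0) (Sum.inr Extra.v),
          (phi x - phi y) * zf x y = phi x * zf x y - phi y * zf x y := by
        intro y _; ring
      rw [Finset.sum_congr rfl this, Finset.sum_sub_distrib, ← Finset.mul_sum, hrow' x hx]
    have e2 : ∑ x ∈ cnbr (gadget E0) (Sum.inr Extra.u),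
        ∑ y ∈ cnbr (gadget E0) (Sum.inr Extra.v), phi y * zf x y
          = ∑ y ∈ cnbr (gadget E0) (Sum.inr Extra.v), phi y * c := by
      rw [Finset.sum_comm]
      exact Finset.sum_congr rfl fun y hy => by rw [← Finset.mul_sum, hcol' y hy]
    have e3 : ∑ x ∈ cnbr (gadget E0) (Sum.inr Extra.u),
        ∑ y ∈ cnbr (gadget E0) (Sum.inr Extra.v), (phi x - phi y) * zf x y
          = ((n : ℝ) + 2) * c := by
      rw [Finset.sum_congr rfl e1, Finset.sum_sub_distrib, e2, ← Finset.sum_mul,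
        ← Finset.sum_mul, sum_cnbrU (F := phi), sum_cnbrV (F := phi)]
      simp only [phi_u, phi_v, phi_p, phi_p', phi_a, phi_b, Finset.sum_const,
        Finset.card_univ, hL, nsmul_eq_mul, mul_one]
      push_cast
      ring
    rw [← e3, planCostG]
    refine Finset.sum_le_sum fun x hx => Finset.sum_le_sum fun y hy => ?_
    exact mul_le_mul_of_nonneg_right (phi_bound hx hy) (hz0 x y)
  -- conclude
  have hmem : ((n : ℝ) + 2) * c ∈
      {t | ∃ z, IsPlanG (gadget E0) (Sum.inr Extra.u) (Sum.inr Extra.v) z ∧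
        planCostG (gadget E0) (Sum.inr Extra.u) (Sum.inr Extra.v) z = t} :=
    ⟨zplan f c, hplan, hcost⟩
  have hlb' : ∀ t ∈ {t | ∃ z, IsPlanG (gadget E0) (Sum.inr Extra.u) (Sum.inr Extra.v) z ∧
      planCostG (gadget E0) (Sum.inr Extra.u) (Sum.inr Extra.v) z = t},
      ((n : ℝ) + 2) * c ≤ t := by
    rintro t ⟨z, hz, rfl⟩
    exact hlb z hz
  have hemd : EMDG (gadget E0) (Sum.inr Extra.u) (Sum.inr Extra.v) = ((n : ℝ) + 2) * c := by
    rw [EMDG]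
    exact le_antisymm (csInf_le ⟨_, hlb'⟩ hmem) (le_csInf ⟨_, hmem⟩ hlb')
  have hfin : ((n : ℝ) + 2) * c = ((n : ℝ) + 2) / ((n : ℝ) + 3) := by
    rw [hc]; ring
  constructor
  · rw [RicG, hemd, hfin]
    rw [sub_eq_iff_eq_add, ← add_div, eq_comm, div_eq_one_iff_eq (ne_of_gt hn3)]
    ring
  · rw [hemd, hfin]
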